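/- arXiv:math/0009220 — 3 statements merged into one kernel-verified Lean document; each statement's English description precedes it below -/
import Mathlib

section
/- Let A = Λ(y₁,y₂) ⊗ ℤ₂⟨t,x₁,x₂⟩/R over ℤ₂, where Λ(y₁,y₂) is the exterior algebra on generators y₁,y₂ (of degrees 1,2), ℤ₂⟨t,x₁,x₂⟩ is the free noncommutative ℤ₂-algebra on t,x₁,x₂ (degrees 1,1,2), and R is the two-sided ideal generated by t², x₁², x₂², and x₁x₂ - x₂x₁. Then every element of A is a ℤ₂-linear combination of elements of the form w_I · t^{ε_t} · x_i^{ε_i} · y_j^{η_j}, where ε_t, ε_i, η_j ∈ {0,1}, w_I = w_{i₁}⋯w_{i_n} is a word in w₁ = x₁t + tx₁, w₂ = x₂t + tx₂, w₃ = x₃t + tx₃ (with x₃ = x₁x₂, y₃ = y₁y₂), and i,j ∈ {1,2,3}. -/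
/-!
The ℤ₂-algebra `A = Λ(y₁,y₂) ⊗ ℤ₂⟨t,x₁,x₂⟩ / R` from Anjos,
"Homotopy type of symplectomorphism groups of S² × S²".
Generators of the free algebra: `0 ↦ t`, `1 ↦ x₁`, `2 ↦ x₂`, `3 ↦ y₁`, `4 ↦ y₂`.
Relations: `t² = x₁² = x₂² = 0`, `x₁x₂ = x₂x₁` (the ideal R), together with the
exterior-algebra relations `y₁² = y₂² = 0`, `y₁y₂ = y₂y₁` and the fact that the
`yᵢ` commute with `t, x₁, x₂` (tensor product).
-/

noncomputable section
open FreeAlgebra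

abbrev F2 := ZMod 2
abbrev FA := FreeAlgebra F2 (Fin 5)

inductive ARel : FA → FA → Prop
  | t2 : ARel (ι F2 0 * ι F2 0) 0
  | x1sq : ARel (ι F2 1 * ι F2 1) 0
  | x2sq : ARel (ι F2 2 * ι F2 2) 0
  | xcomm : ARel (ι F2 1 * ι F2 2) (ι F2 2 * ι F2 1)
  | y1sq : ARel (ι F2 3 * ι F2 3) 0
  | y2sq : ARel (ι F2 4 * ι F2 4) 0
  | ycomm : ARel (ι F2 3 * ι F2 4) (ι F2 4 * ι F2 3)
  | ycentral (i : Fin 3) (j : Fin 2) :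
      ARel (ι F2 (Fin.castLE (by omega) i) * ι F2 (3 + Fin.castLE (by omega) j))
           (ι F2 (3 + Fin.castLE (by omega) j) * ι F2 (Fin.castLE (by omega) i))

/-- The algebra `A = Λ(y₁,y₂) ⊗ ℤ₂⟨t,x₁,x₂⟩ / R`. -/
abbrev A := RingQuot ARel

def g (i : Fin 5) : A := RingQuot.mkAlgHom F2 ARel (ι F2 i)

/-- the degree-1 generator `t` -/
def t : A := g 0
/-- `xg 0 = x₁` (deg 1), `xg 1 = x₂` (deg 2), `xg 2 = x₃ = x₁x₂` (deg 3) -/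
def xg : Fin 3 → A := ![g 1, g 2, g 1 * g 2]
/-- `yg 0 = y₁` (deg 1), `yg 1 = y₂` (deg 2), `yg 2 = y₃ = y₁y₂` (deg 3) -/
def yg : Fin 3 → A := ![g 3, g 4, g 3 * g 4]
/-- `w i = xᵢ₊₁ t + t xᵢ₊₁` for `i = 0,1,2` (the commutators `w₁,w₂,w₃`) -/
def w (i : Fin 3) : A := xg i * t + t * xg i
/-- the word `w_I = w_{i₁} ⋯ w_{i_n}` -/
def wWord (I : List (Fin 3)) : A := (I.map w).prod



section Aux

local notation "pi" => RingQuot.mkAlgHom F2 ARel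

lemma grel {a b : FA} (h : ARel a b) : pi a = pi b :=
  RingQuot.mkAlgHom_rel F2 h

lemma gg {a b : FA} (h : ARel (a * b) 0) :
    pi a * pi b = 0 := by
  rw [← map_mul]; rw [grel h]; simp

lemma two_zero (a : A) : a + a = 0 := by
  have h : (2 : F2) • a = a + a := two_smul F2 a
  rw [show (2 : F2) = 0 by decide, zero_smul] at h
  exact h.symm

-- basic relations among generators
lemma sq0 : g 0 * g 0 = 0 := gg ARel.t2
lemma sq1 : g 1 * g 1 = 0 := gg ARel.x1sq
lemma sq2 : g 2 * g 2 = 0 := gg ARel.x2sq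
lemma sq3 : g 3 * g 3 = 0 := gg ARel.y1sq
lemma sq4 : g 4 * g 4 = 0 := gg ARel.y2sq
lemma c21 : g 2 * g 1 = g 1 * g 2 := by
  have h := grel ARel.xcomm; simp only [map_mul] at h; exact h.symm
lemma c43 : g 4 * g 3 = g 3 * g 4 := by
  have h := grel ARel.ycomm; simp only [map_mul] at h; exact h.symm

lemma cyc (i : Fin 3) (j : Fin 2) :
    g (Fin.castLE (by omega) i) * g (3 + Fin.castLE (by omega) j)
      = g (3 + Fin.castLE (by omega) j) * g (Fin.castLE (by omega) i) := by
  have h := grel (ARel.ycentral i j); simp only [map_mul] at h; exact h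

lemma c03 : g 0 * g 3 = g 3 * g 0 := cyc 0 0
lemma c04 : g 0 * g 4 = g 4 * g 0 := cyc 0 1
lemma c13 : g 1 * g 3 = g 3 * g 1 := cyc 1 0
lemma c14 : g 1 * g 4 = g 4 * g 1 := cyc 1 1
lemma c23 : g 2 * g 3 = g 3 * g 2 := cyc 2 0
lemma c24 : g 2 * g 4 = g 4 * g 2 := cyc 2 1

lemma comm_t_yg (k : Fin 3) : Commute t (yg k) := by
  fin_cases k <;> simp only [t, yg, Matrix.cons_val_zero, Matrix.cons_val_one,
    Matrix.head_cons, Matrix.cons_val_two, Matrix.tail_cons]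
  · exact c03
  · exact c04
  · exact (Commute.mul_right c03 c04 : _)

lemma comm_xg_yg (j k : Fin 3) : Commute (xg j) (yg k) := by
  have h1 : ∀ k, Commute (g 1) (yg k) := by
    intro k; fin_cases k <;>
      simp only [yg, Matrix.cons_val_zero, Matrix.cons_val_one, Matrix.head_cons,
        Matrix.cons_val_two, Matrix.tail_cons]
    · exact c13
    · exact c14
    · exact (Commute.mul_right c13 c14 : _)
  have h2 : ∀ k, Commute (g 2) (yg k) := by
    intro k; fin_cases k <;>
      simp only [yg, Matrix.cons_val_zero, Matrix.cons_val_one, Matrix.head_cons,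
        Matrix.cons_val_two, Matrix.tail_cons]
    · exact c23
    · exact c24
    · exact (Commute.mul_right c23 c24 : _)
  fin_cases j <;> simp only [xg, Matrix.cons_val_zero, Matrix.cons_val_one,
    Matrix.head_cons, Matrix.cons_val_two, Matrix.tail_cons]
  · exact h1 k
  · exact h2 k
  · exact (Commute.mul_left (h1 k) (h2 k) : _)

-- associativity-shifted squares
lemma sq1' (a : A) : g 1 * (g 1 * a) = 0 := by rw [← mul_assoc, sq1, zero_mul]
lemma sq2' (a : A) : g 2 * (g 2 * a) = 0 := by rw [← mul_assoc, sq2, zero_mul]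
lemma sq3' (a : A) : g 3 * (g 3 * a) = 0 := by rw [← mul_assoc, sq3, zero_mul]
lemma sq4' (a : A) : g 4 * (g 4 * a) = 0 := by rw [← mul_assoc, sq4, zero_mul]
lemma c21' (a : A) : g 2 * (g 1 * a) = g 1 * (g 2 * a) := by
  rw [← mul_assoc, ← mul_assoc, c21]
lemma c43' (a : A) : g 4 * (g 3 * a) = g 3 * (g 4 * a) := by
  rw [← mul_assoc, ← mul_assoc, c43]

/-- multiplication table for the `xg`: each product is `0` or `xg 2` -/
lemma xg_mul (j k : Fin 3) : xg j * xg k = 0 ∨ xg j * xg k = xg 2 := by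
  fin_cases j <;> fin_cases k <;>
    simp only [xg, Matrix.cons_val_zero, Matrix.cons_val_one, Matrix.head_cons,
      Matrix.cons_val_two, Matrix.tail_cons]
  · left; exact sq1
  · right; rfl
  · left; simp [mul_assoc, sq1, sq2, c21, sq1', sq2', c21']
  · right; exact c21
  · left; exact sq2
  · left; simp [mul_assoc, sq1, sq2, c21, sq1', sq2', c21']
  · left; simp [mul_assoc, sq1, sq2, c21, sq1', sq2', c21']
  · left; simp [mul_assoc, sq1, sq2, c21, sq1', sq2', c21']
  · left; simp [mul_assoc, sq1, sq2, c21, sq1', sq2', c21']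

/-- multiplication table for the `yg`: each product is `0` or `yg 2` -/
lemma yg_mul (j k : Fin 3) : yg j * yg k = 0 ∨ yg j * yg k = yg 2 := by
  fin_cases j <;> fin_cases k <;>
    simp only [yg, Matrix.cons_val_zero, Matrix.cons_val_one, Matrix.head_cons,
      Matrix.cons_val_two, Matrix.tail_cons]
  · left; exact sq3
  · right; rfl
  · left; simp [mul_assoc, sq3, sq4, c43, sq3', sq4', c43']
  · right; exact c43
  · left; exact sq4
  · left; simp [mul_assoc, sq3, sq4, c43, sq3', sq4', c43']
  · left; simp [mul_assoc, sq3, sq4, c43, sq3', sq4', c43']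
  · left; simp [mul_assoc, sq3, sq4, c43, sq3', sq4', c43']
  · left; simp [mul_assoc, sq3, sq4, c43, sq3', sq4', c43']

lemma tt : t * t = 0 := sq0
lemma tt' (a : A) : t * (t * a) = 0 := by rw [← mul_assoc, tt, zero_mul]

lemma w_t_comm (i : Fin 3) : Commute (w i) t := by
  show w i * t = t * w i
  simp only [w, add_mul, mul_add, mul_assoc, tt, tt', mul_zero, add_zero, zero_add]

lemma xg_t (i : Fin 3) : xg i * t = w i + t * xg i := by
  rw [w, add_assoc, two_zero, add_zero]

lemma wWord_append (I : List (Fin 3)) (i : Fin 3) :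
    wWord (I ++ [i]) = wWord I * w i := by
  simp [wWord]

abbrev bSet : Set A := {a : A | ∃ (I : List (Fin 3)) (et : Bool)
      (ix jy : Option (Fin 3)),
      a = wWord I * (if et then t else 1) * (ix.elim 1 xg) * (jy.elim 1 yg)}

abbrev S : Submodule F2 A := Submodule.span F2 bSet

lemma mem_basic (I : List (Fin 3)) (et : Bool) (ix jy : Option (Fin 3)) :
    wWord I * (if et then t else 1) * (ix.elim 1 xg) * (jy.elim 1 yg) ∈ S :=
  Submodule.subset_span ⟨I, et, ix, jy, rfl⟩

lemma comm_Y_t (jy : Option (Fin 3)) : Commute (jy.elim 1 yg) t := by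
  cases jy with
  | none => exact Commute.one_left t
  | some j => exact (comm_t_yg j).symm

lemma comm_Y_xg (jy : Option (Fin 3)) (k : Fin 3) : Commute (jy.elim 1 yg) (xg k) := by
  cases jy with
  | none => exact Commute.one_left _
  | some j => exact (comm_xg_yg k j).symm

lemma basic_mul_yg (I : List (Fin 3)) (et : Bool) (ix jy : Option (Fin 3)) (k : Fin 3) :
    wWord I * (if et then t else 1) * (ix.elim 1 xg) * (jy.elim 1 yg) * yg k ∈ S := by
  cases jy with
  | none =>
      simpa [mul_assoc] using mem_basic I et ix (some k)
  | some j =>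
      simp only [Option.elim_some]
      rw [mul_assoc _ (yg j) (yg k)]
      rcases yg_mul j k with h | h <;> rw [h]
      · simp
      · simpa [mul_assoc] using mem_basic I et ix (some 2)

lemma basic_mul_xg (I : List (Fin 3)) (et : Bool) (ix jy : Option (Fin 3)) (k : Fin 3) :
    wWord I * (if et then t else 1) * (ix.elim 1 xg) * (jy.elim 1 yg) * xg k ∈ S := by
  rw [mul_assoc _ (jy.elim 1 yg) (xg k), comm_Y_xg jy k, ← mul_assoc]
  cases ix with
  | none =>
      simpa [mul_assoc] using mem_basic I et (some k) jy
  | some i =>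
      simp only [Option.elim_some]
      rw [mul_assoc _ (xg i) (xg k)]
      rcases xg_mul i k with h | h <;> rw [h]
      · simp
      · simpa [mul_assoc] using mem_basic I et (some 2) jy

lemma basic_mul_t (I : List (Fin 3)) (et : Bool) (ix jy : Option (Fin 3)) :
    wWord I * (if et then t else 1) * (ix.elim 1 xg) * (jy.elim 1 yg) * t ∈ S := by
  rw [mul_assoc _ (jy.elim 1 yg) t, comm_Y_t jy, ← mul_assoc]
  cases ix with
  | none =>
      cases et with
      | false =>
          simpa [mul_assoc] using mem_basic I true none jy
      | true =>
          simp only [if_true, Option.elim, mul_one]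
          rw [mul_assoc _ t t, tt]
          simp
  | some i =>
      simp only [Option.elim_some]
      rw [mul_assoc _ (xg i) t, xg_t i, mul_add, add_mul]
      apply S.add_mem
      · -- term with w i
        have hw : (if et then t else 1) * w i = w i * (if et then t else 1) := by
          cases et <;> simp [(w_t_comm i).eq]
        rw [mul_assoc (wWord I), hw, ← mul_assoc, ← wWord_append]
        simpa [mul_assoc] using mem_basic (I ++ [i]) et none jy
      · -- term with t * xg i
        cases et with
        | false =>
            simpa [mul_assoc] using mem_basic I true (some i) jy
        | true =>
            simp only [if_true]
            rw [← mul_assoc, mul_assoc (wWord I) t t, tt]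
            simp

lemma S_mul_g (s : A) (hs : s ∈ S) (m : Fin 5) : s * g m ∈ S := by
  induction hs using Submodule.span_induction generalizing m with
  | mem a ha =>
      obtain ⟨I, et, ix, jy, rfl⟩ := ha
      fin_cases m
      · exact basic_mul_t I et ix jy
      · simpa [show xg 0 = g 1 from rfl] using basic_mul_xg I et ix jy 0
      · simpa [show xg 1 = g 2 from rfl] using basic_mul_xg I et ix jy 1
      · simpa [show yg 0 = g 3 from rfl] using basic_mul_yg I et ix jy 0
      · simpa [show yg 1 = g 4 from rfl] using basic_mul_yg I et ix jy 1
  | zero => simp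
  | add a b _ _ ha hb => rw [add_mul]; exact S.add_mem (ha m) (hb m)
  | smul r a _ ha => rw [smul_mul_assoc]; exact S.smul_mem r (ha m)

lemma one_mem_S : (1 : A) ∈ S := by
  simpa [wWord] using mem_basic [] false none none

end Aux

/-- Lemma 2.5 of the paper: every element of `A` is a ℤ₂-linear
combination of elements of the form `w_I · t^{ε_t} · x_i^{ε_i} · y_j^{η_j}`,
where the optional factors `x_i` (resp. `y_j`) range over `x₁,x₂,x₃`
(resp. `y₁,y₂,y₃`), encoded by `Option (Fin 3)`. -/
theorem stmt_0 (a : A) :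
    a ∈ Submodule.span F2 {a : A | ∃ (I : List (Fin 3)) (et : Bool)
      (ix jy : Option (Fin 3)),
      a = wWord I * (if et then t else 1) * (ix.elim 1 xg) * (jy.elim 1 yg)} := by
  show a ∈ S
  obtain ⟨f, rfl⟩ := RingQuot.mkAlgHom_surjective F2 ARel a
  have key : ∀ s ∈ S, s * RingQuot.mkAlgHom F2 ARel f ∈ S := by
    induction f using FreeAlgebra.induction with
    | grade0 r =>
        intro s hs
        rw [AlgHom.commutes]
        rw [Algebra.algebraMap_eq_smul_one, mul_smul_comm, mul_one]
        exact S.smul_mem r hs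
    | grade1 i =>
        intro s hs
        exact S_mul_g s hs i
    | mul f1 f2 h1 h2 =>
        intro s hs
        rw [map_mul, ← mul_assoc]
        exact h2 _ (h1 s hs)
    | add f1 f2 h1 h2 =>
        intro s hs
        rw [map_add, mul_add]
        exact S.add_mem (h1 s hs) (h2 s hs)
  simpa using key 1 one_mem_S
end
end

section
/- The subalgebra of A = Λ(y₁,y₂) ⊗ ℤ₂⟨t,x₁,x₂⟩/R (with R = (t², x₁², x₂², x₁x₂ - x₂x₁)) generated by the three elements w₁ = x₁t + tx₁, w₂ = x₂t + tx₂, w₃ = x₃t + tx₃ (with x₃ = x₁x₂) is a free noncommutative ℤ₂-algebra on these three generators; i.e., the distinct words in w₁, w₂, w₃ are linearly independent over ℤ₂. -/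
/-!
The ℤ₂-algebra `A = Λ(y₁,y₂) ⊗ ℤ₂⟨t,x₁,x₂⟩ / R` from Anjos,
"Homotopy type of symplectomorphism groups of S² × S²".
Generators of the free algebra: `0 ↦ t`, `1 ↦ x₁`, `2 ↦ x₂`, `3 ↦ y₁`, `4 ↦ y₂`.
Relations: `t² = x₁² = x₂² = 0`, `x₁x₂ = x₂x₁` (the ideal R), together with the
exterior-algebra relations `y₁² = y₂² = 0`, `y₁y₂ = y₂y₁` and the fact that the
`yᵢ` commute with `t, x₁, x₂` (tensor product).
-/

noncomputable section
open FreeAlgebra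

/-! ### A representation of `A` on the vector space with basis `List ℕ`

We represent `A` on `V = (List ℕ →₀ F2)`, thinking of a list as a word in the
letters `0 ↦ t`, `1 ↦ x₁`, `2 ↦ x₂`, `3 ↦ x₃ = x₁x₂` (normal forms in the
quotient of the free algebra on `t, x₁, x₂` by the ideal `R`); `y₁, y₂` act by
zero.  Acting by a generator prepends the corresponding letter, using the
relations to cancel/merge adjacent letters. -/

abbrev V := List ℕ →₀ F2

def sgl (m : List ℕ) : V := Finsupp.single m 1

/-- action of `t` on a basis word -/
def tf : List ℕ → V
  | [] => sgl [0]
  | (j :: r) => if j = 0 then 0 else sgl (0 :: j :: r)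

/-- action of letter `x_i` (`i = 1` or `2`) on a basis word -/
def xf (i : ℕ) : List ℕ → V
  | [] => sgl [i]
  | (j :: r) =>
      if j = 0 then sgl (i :: 0 :: r)
      else if (i = 1 ∧ j = 2) ∨ (i = 2 ∧ j = 1) then sgl (3 :: r) else 0

/-- extend a function on basis words to a linear endomorphism -/
def ext (f : List ℕ → V) : V →ₗ[F2] V :=
  Finsupp.lsum F2 fun m => LinearMap.toSpanSingleton F2 V (f m)

lemma ext_sgl (f : List ℕ → V) (m : List ℕ) : ext f (sgl m) = f m := by
  simp [ext, sgl, Finsupp.lsum_single]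

lemma endo_ext {φ ψ : V →ₗ[F2] V} (h : ∀ m, φ (sgl m) = ψ (sgl m)) : φ = ψ := by
  refine Finsupp.lhom_ext fun m b => ?_
  have : (Finsupp.single m b : V) = b • sgl m := by simp [sgl, Finsupp.smul_single]
  rw [this, map_smul, map_smul, h]

def T : Module.End F2 V := ext tf
def X (i : ℕ) : Module.End F2 V := ext (xf i)

lemma T_sq : T * T = 0 := by
  apply endo_ext; intro m
  rcases m with _ | ⟨j, r⟩ <;>
    simp only [Module.End.mul_apply, T, ext_sgl, tf, LinearMap.zero_apply]
  · norm_num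
  · by_cases hj : j = 0 <;> simp [hj, ext_sgl, tf]

lemma X1_sq : X 1 * X 1 = 0 := by
  apply endo_ext; intro m
  rcases m with _ | ⟨j, r⟩ <;>
    simp only [Module.End.mul_apply, X, ext_sgl, xf, LinearMap.zero_apply]
  · norm_num
  · by_cases hj : j = 0
    · simp [hj, ext_sgl, xf]
    · by_cases h2 : j = 2 <;> simp [hj, h2, ext_sgl, xf]

lemma X2_sq : X 2 * X 2 = 0 := by
  apply endo_ext; intro m
  rcases m with _ | ⟨j, r⟩ <;>
    simp only [Module.End.mul_apply, X, ext_sgl, xf, LinearMap.zero_apply]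
  · norm_num
  · by_cases hj : j = 0
    · simp [hj, ext_sgl, xf]
    · by_cases h1 : j = 1 <;> simp [hj, h1, ext_sgl, xf]

lemma X_comm : X 1 * X 2 = X 2 * X 1 := by
  apply endo_ext; intro m
  rcases m with _ | ⟨j, r⟩ <;>
    simp only [Module.End.mul_apply, X, ext_sgl, xf]
  · norm_num
  · by_cases hj : j = 0
    · simp [hj, ext_sgl, xf]
    · by_cases h1 : j = 1
      · simp [hj, h1, ext_sgl, xf]
      · by_cases h2 : j = 2 <;> simp [hj, h1, h2, ext_sgl, xf]

def gen : Fin 5 → Module.End F2 V := ![T, X 1, X 2, 0, 0]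

def ρ₀ : FA →ₐ[F2] Module.End F2 V := FreeAlgebra.lift F2 gen

lemma rel {r s : FA} (h : ARel r s) : ρ₀ r = ρ₀ s := by
  cases h <;> simp only [ρ₀, map_mul, map_zero, FreeAlgebra.lift_ι_apply]
  · show gen 0 * gen 0 = 0; simpa [gen] using T_sq
  · show gen 1 * gen 1 = 0; simpa [gen] using X1_sq
  · show gen 2 * gen 2 = 0; simpa [gen] using X2_sq
  · show gen 1 * gen 2 = gen 2 * gen 1; simpa [gen] using X_comm
  · show gen 3 * gen 3 = 0; simp [gen]
  · show gen 4 * gen 4 = 0; simp [gen]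
  · show gen 3 * gen 4 = gen 4 * gen 3; simp [gen]
  · rename_i i j
    have hz : gen (3 + Fin.castLE (by omega) j) = 0 := by fin_cases j <;> rfl
    rw [hz, mul_zero, zero_mul]

def ρ : A →ₐ[F2] Module.End F2 V :=
  RingQuot.liftAlgHom F2 ⟨ρ₀, fun _ _ h => rel h⟩

lemma ρ_g (i : Fin 5) : ρ (g i) = gen i := by
  simp [ρ, g, RingQuot.liftAlgHom_mkAlgHom_apply, ρ₀]

def Xe : Fin 3 → Module.End F2 V := ![X 1, X 2, X 1 * X 2]

lemma ρ_t : ρ t = T := by rw [t, ρ_g]; rfl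

lemma ρ_xg (i : Fin 3) : ρ (xg i) = Xe i := by
  fin_cases i
  · show ρ (g 1) = X 1; rw [ρ_g]; rfl
  · show ρ (g 2) = X 2; rw [ρ_g]; rfl
  · show ρ (g 1 * g 2) = X 1 * X 2; rw [map_mul, ρ_g, ρ_g]; rfl

lemma ρ_w (i : Fin 3) : ρ (w i) = Xe i * T + T * Xe i := by
  rw [w, map_add, map_mul, map_mul, ρ_t, ρ_xg]

/-- the subspace of `V` spanned by basis words starting with the letter `t` -/
def Z : Submodule F2 V := Finsupp.supported F2 F2 {m : List ℕ | m.head? = some 0}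

lemma sgl_cons0_mem_Z (r : List ℕ) : sgl (0 :: r) ∈ Z :=
  Finsupp.single_mem_supported F2 1 (by simp)

lemma T_mem_Z (v : V) : T v ∈ Z := by
  induction v using Finsupp.induction_linear with
  | zero => simp
  | add a b ha hb => rw [map_add]; exact Z.add_mem ha hb
  | single m b =>
    have : (Finsupp.single m b : V) = b • sgl m := by simp [sgl, Finsupp.smul_single]
    rw [this, map_smul]
    refine Z.smul_mem b ?_
    rw [T, ext_sgl]
    rcases m with _ | ⟨j, r⟩
    · exact sgl_cons0_mem_Z []
    · rw [show tf (j :: r) = if j = 0 then 0 else sgl (0 :: j :: r) from rfl]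
      split
      · exact Z.zero_mem
      · exact sgl_cons0_mem_Z (j :: r)

lemma T_zero_on_Z {v : V} (hv : v ∈ Z) : T v = 0 := by
  have hle : Z ≤ LinearMap.ker T := by
    rw [Z, Finsupp.supported_eq_span_single, Submodule.span_le]
    rintro _ ⟨m, hm, rfl⟩
    rcases m with _ | ⟨j, r⟩
    · simp at hm
    · simp only [Set.mem_setOf_eq, List.head?_cons, Option.some_inj] at hm
      subst hm
      simp [LinearMap.mem_ker, show (Finsupp.single (0::r) (1:F2) : V) = sgl (0::r) from rfl,
        T, ext_sgl, tf]
  simpa [LinearMap.mem_ker] using hle hv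

lemma Xe_cons0 (i : Fin 3) (r : List ℕ) :
    Xe i (sgl (0 :: r)) = sgl (((i : ℕ) + 1) :: 0 :: r) := by
  fin_cases i <;>
    simp [Xe, X, Module.End.mul_apply, ext_sgl, xf]

/-- the normal-form word corresponding to a word in the `w i` -/
def pat : List (Fin 3) → List ℕ
  | [] => []
  | i :: I => ((i : ℕ) + 1) :: 0 :: pat I

lemma T_sgl_pat (I : List (Fin 3)) : T (sgl (pat I)) = sgl (0 :: pat I) := by
  cases I with
  | nil => simp [pat, T, ext_sgl, tf]
  | cons i I => simp [pat, T, ext_sgl, tf]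

lemma w_mem_Z (i : Fin 3) {v : V} (hv : v ∈ Z) : ρ (w i) v ∈ Z := by
  rw [ρ_w]
  simp only [LinearMap.add_apply, Module.End.mul_apply]
  rw [T_zero_on_Z hv, map_zero]
  rw [zero_add]
  exact T_mem_Z _

lemma main (I : List (Fin 3)) :
    ∃ E ∈ Z, ρ (wWord I) (sgl []) = sgl (pat I) + E := by
  induction I with
  | nil => exact ⟨0, Z.zero_mem, by simp [wWord, pat]⟩
  | cons i I ih =>
    obtain ⟨E, hE, hval⟩ := ih
    have hw : wWord (i :: I) = w i * wWord I := by simp [wWord]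
    refine ⟨T (Xe i (sgl (pat I))) + ρ (w i) E, Z.add_mem (T_mem_Z _) (w_mem_Z i hE), ?_⟩
    rw [hw, map_mul, Module.End.mul_apply, hval, map_add, ρ_w]
    simp only [LinearMap.add_apply, Module.End.mul_apply, T_sgl_pat, Xe_cons0]
    rw [show pat (i :: I) = ((i : ℕ) + 1) :: 0 :: pat I from rfl]
    abel

/-- decode a normal-form word back into a word in the `w i` -/
def dec : List ℕ → Option (List (Fin 3))
  | [] => some []
  | a :: 0 :: r =>
      if h : 0 < a ∧ a < 4 then (dec r).map (List.cons ⟨a - 1, by omega⟩) else none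
  | _ => none

lemma dec_pat (I : List (Fin 3)) : dec (pat I) = some I := by
  induction I with
  | nil => rfl
  | cons i I ih =>
    have hi : (0 : ℕ) < (i : ℕ) + 1 ∧ (i : ℕ) + 1 < 4 := ⟨Nat.succ_pos _, by omega⟩
    rw [pat, dec, dif_pos hi, ih]
    simp

lemma dec_Z {m : List ℕ} (h : m.head? = some 0) : dec m = none := by
  rcases m with _ | ⟨j, r⟩
  · simp at h
  · simp only [List.head?_cons, Option.some_inj] at h
    subst h
    rcases r with _ | ⟨b, r⟩
    · rfl
    · rcases b with _ | b
      · rw [dec]; simp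
      · rfl

/-- the linear map `A → (List (Fin 3) →₀ F2)` detecting words in the `w i` -/
def Φ : A →ₗ[F2] (List (Fin 3) →₀ F2) :=
  (Finsupp.lcomapDomain (some : List (Fin 3) → Option (List (Fin 3)))
      (Option.some_injective _)) ∘ₗ
    (Finsupp.lmapDomain F2 F2 dec) ∘ₗ
    (LinearMap.applyₗ (sgl [])) ∘ₗ ρ.toLinearMap

lemma Φ_wWord (I : List (Fin 3)) : Φ (wWord I) = Finsupp.single I 1 := by
  obtain ⟨E, hE, hval⟩ := main I
  have hnone : ∀ J : List (Fin 3), (Finsupp.mapDomain dec E) (some J) = 0 := by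
    intro J
    by_contra h
    have hmem : some J ∈ (Finsupp.mapDomain dec E).support := Finsupp.mem_support_iff.2 h
    have := Finsupp.mapDomain_support hmem
    simp only [Finset.mem_image] at this
    obtain ⟨m, hm, hdm⟩ := this
    have hm0 : m.head? = some 0 := (Finsupp.mem_supported F2 E).1 hE hm
    rw [dec_Z hm0] at hdm
    cases hdm
  ext J
  simp only [Φ, LinearMap.comp_apply, AlgHom.toLinearMap_apply]
  rw [show (LinearMap.applyₗ (sgl []) : Module.End F2 V →ₗ[F2] V) (ρ (wWord I))
      = (ρ (wWord I)) (sgl []) from rfl, hval]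
  simp only [Finsupp.lmapDomain_apply, Finsupp.lcomapDomain, LinearMap.coe_mk, AddHom.coe_mk,
    Finsupp.comapDomain_apply, Finsupp.mapDomain_add, sgl, Finsupp.mapDomain_single, dec_pat,
    Finsupp.add_apply]
  rw [hnone J, add_zero, Finsupp.single_apply_left (Option.some_injective _)]

/-- the distinct words in `w₁, w₂, w₃` are linearly independent
over ℤ₂, i.e. the subalgebra they generate is free noncommutative on these
three generators. -/
theorem stmt_3 : LinearIndependent F2 (fun I : List (Fin 3) => wWord I) := by
  apply LinearIndependent.of_comp Φ
  have : (⇑Φ ∘ fun I : List (Fin 3) => wWord I) = fun I => Finsupp.single I (1 : F2) := by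
    funext I; exact Φ_wWord I
  rw [this]
  have := (Finsupp.basisSingleOne (R := F2) (ι := List (Fin 3))).linearIndependent
  simpa [Finsupp.coe_basisSingleOne] using this
end
end

section
/- In the graded ℤ₂-algebra A = Λ(y₁,y₂) ⊗ ℤ₂⟨t,x₁,x₂⟩/R with deg t = deg x₁ = deg y₁ = 1, deg x₂ = deg y₂ = 2, and R = (t², x₁², x₂², x₁x₂ - x₂x₁), the elements of the form w_I t^{ε_t} x_i^{ε_i} y_j^{η_j} (where w_I ranges over words in w₁,w₂,w₃, ε_t,ε_i,η_j ∈ {0,1}, i,j ∈ {1,2,3}) form a ℤ₂-vector space basis of A. -/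
/-!
The ℤ₂-algebra `A = Λ(y₁,y₂) ⊗ ℤ₂⟨t,x₁,x₂⟩ / R` from Anjos,
"Homotopy type of symplectomorphism groups of S² × S²".
Generators of the free algebra: `0 ↦ t`, `1 ↦ x₁`, `2 ↦ x₂`, `3 ↦ y₁`, `4 ↦ y₂`.
Relations: `t² = x₁² = x₂² = 0`, `x₁x₂ = x₂x₁` (the ideal R), together with the
exterior-algebra relations `y₁² = y₂² = 0`, `y₁y₂ = y₂y₁` and the fact that the
`yᵢ` commute with `t, x₁, x₂` (tensor product).
-/

noncomputable section
open FreeAlgebra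

/-- index of a normalized monomial `w_I t^{ε_t} x_i^{ε_i} y_j^{η_j}` -/
abbrev BIx := List (Fin 3) × Bool × Option (Fin 3) × Option (Fin 3)

/-- the normalized monomial associated to an index -/
def bElt : BIx → A := fun ⟨I, et, ix, jy⟩ =>
  wWord I * (if et then t else 1) * (ix.elim 1 xg) * (jy.elim 1 yg)

namespace Stmt4
open Finsupp MulOpposite

abbrev M := BIx →₀ F2

/-- product step for x-letters / y-letters: `none`↦`x_{j+1}`, products among `x₁,x₂,x₃`. -/
def mulOpt : Fin 2 → Option (Fin 3) → Option (Option (Fin 3))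
  | 0, none => some (some 0)
  | 0, Option.some 1 => some (some 2)
  | 1, none => some (some 1)
  | 1, Option.some 0 => some (some 2)
  | _, _ => none

def rT : BIx → M
  | (I, false, none, jy) => single (I, true, none, jy) 1
  | (I, false, Option.some i, jy) =>
      single (I ++ [i], false, none, jy) 1 + single (I, true, some i, jy) 1
  | (_, true, none, _) => 0
  | (I, true, Option.some i, jy) => single (I ++ [i], true, none, jy) 1

def rX (j : Fin 2) : BIx → M
  | (I, e, ix, jy) => (mulOpt j ix).elim 0 (fun ix' => single (I, e, ix', jy) 1)

def rY (j : Fin 2) : BIx → M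
  | (I, e, ix, jy) => (mulOpt j jy).elim 0 (fun jy' => single (I, e, ix, jy') 1)

def RT : M →ₗ[F2] M := Finsupp.lift M F2 BIx rT
def RX (j : Fin 2) : M →ₗ[F2] M := Finsupp.lift M F2 BIx (rX j)
def RY (j : Fin 2) : M →ₗ[F2] M := Finsupp.lift M F2 BIx (rY j)

def G : Fin 5 → (M →ₗ[F2] M) := ![RT, RX 0, RX 1, RY 0, RY 1]

@[simp] lemma RT_single (b : BIx) : RT (single b 1) = rT b := by
  simp [RT, Finsupp.lift_apply, Finsupp.sum_single_index]
@[simp] lemma RX_single (j : Fin 2) (b : BIx) : RX j (single b 1) = rX j b := by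
  simp [RX, Finsupp.lift_apply, Finsupp.sum_single_index]
@[simp] lemma RY_single (j : Fin 2) (b : BIx) : RY j (single b 1) = rY j b := by
  simp [RY, Finsupp.lift_apply, Finsupp.sum_single_index]

@[simp] lemma addself (m : M) : m + m = 0 := by
  have : (2 : F2) = 0 := rfl
  calc m + m = (2 : F2) • m := by rw [two_smul]
  _ = 0 := by rw [this, zero_smul]

lemma endext {f f' : M →ₗ[F2] M} (h : ∀ b, f (single b 1) = f' (single b 1)) : f = f' := by
  apply Finsupp.lhom_ext
  intro a c
  have : (single a c : M) = c • single a 1 := by rw [Finsupp.smul_single, smul_eq_mul, mul_one]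
  rw [this, map_smul, map_smul, h]

attribute [irreducible] RT RX RY

def Φfree : FA →ₐ[F2] (Module.End F2 M)ᵐᵒᵖ :=
  FreeAlgebra.lift F2 (fun i => op (G i))

lemma commTY (k : Fin 2) : RT * RY k = RY k * RT := by
  apply endext
  rintro ⟨I, e, ix, jy⟩
  cases e <;> rcases ix with _ | ix <;> rcases jy with _ | jy <;>
    (try fin_cases jy) <;> fin_cases k <;>
      simp [rT, rX, rY, mulOpt, Module.End.mul_apply]

lemma commXY (j k : Fin 2) : RX j * RY k = RY k * RX j := by
  apply endext
  rintro ⟨I, e, ix, jy⟩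
  rcases ix with _ | ix <;> rcases jy with _ | jy <;>
    (try fin_cases ix) <;> (try fin_cases jy) <;> fin_cases j <;> fin_cases k <;>
      simp [rX, rY, mulOpt, Module.End.mul_apply]

lemma Glow (a : Fin 5) (h : a.val < 3) : G a = RT ∨ G a = RX 0 ∨ G a = RX 1 := by
  fin_cases a <;> simp [G] at h ⊢ <;> omega

lemma Ghigh (b : Fin 5) (h : 3 ≤ b.val) : G b = RY 0 ∨ G b = RY 1 := by
  fin_cases b <;> simp [G] at h ⊢ <;> omega

lemma commLH (a b : Fin 5) (ha : a.val < 3) (hb : 3 ≤ b.val) : G a * G b = G b * G a := by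
  rcases Glow a ha with h1 | h1 | h1 <;> rcases Ghigh b hb with h2 | h2 <;>
    rw [h1, h2] <;> first | exact commTY _ | exact commXY _ _

lemma rel : ∀ ⦃x y : FA⦄, ARel x y → Φfree x = Φfree y := by
  intro x y h
  induction h with
  | ycentral i j =>
      simp only [Φfree, map_mul, FreeAlgebra.lift_ι_apply, ← op_mul]
      congr 1
      have ha : (Fin.castLE (by omega : 3 ≤ 5) i : Fin 5).val < 3 := by
        simp only [Fin.coe_castLE]; exact i.isLt
      have hb : 3 ≤ ((3 : Fin 5) + Fin.castLE (by omega : 2 ≤ 5) j).val := by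
        have h2 := Fin.val_add (3 : Fin 5) (Fin.castLE (by omega : 2 ≤ 5) j)
        have h3 : (Fin.castLE (by omega : 2 ≤ 5) j : Fin 5).val = j.val := Fin.coe_castLE _ _
        have h4 := j.isLt
        have h5 : ((3 : Fin 5)).val = 3 := rfl
        omega
      exact (commLH _ _ ha hb).symm
  | _ =>
      simp only [Φfree, map_mul, map_zero, FreeAlgebra.lift_ι_apply, ← op_mul] <;>
      first
        | (rw [show (0 : (Module.End F2 M)ᵐᵒᵖ) = op 0 from rfl]; congr 1;
           simp only [G, Matrix.cons_val_zero, Matrix.cons_val_one, Matrix.head_cons,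
             Matrix.cons_val_two, Matrix.tail_cons, Matrix.cons_val_three, Matrix.cons_val_four];
           apply endext; rintro ⟨I, e, ix, jy⟩ <;>
             cases e <;> rcases ix with _ | ix <;> rcases jy with _ | jy <;>
               (try fin_cases ix) <;> (try fin_cases jy) <;>
                 simp [rT, rX, rY, mulOpt, Module.End.mul_apply])
        | (congr 1;
           simp only [G, Matrix.cons_val_zero, Matrix.cons_val_one, Matrix.head_cons,
             Matrix.cons_val_two, Matrix.tail_cons, Matrix.cons_val_three, Matrix.cons_val_four];
           apply endext; rintro ⟨I, e, ix, jy⟩ <;>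
             cases e <;> rcases ix with _ | ix <;> rcases jy with _ | jy <;>
               (try fin_cases ix) <;> (try fin_cases jy) <;>
                 simp [rX, rY, mulOpt, Module.End.mul_apply])


def Φ : A →ₐ[F2] (Module.End F2 M)ᵐᵒᵖ :=
  RingQuot.liftAlgHom F2 ⟨Φfree, rel⟩

lemma Φ_g (i : Fin 5) : Φ (g i) = op (G i) := by
  rw [g, Φ, RingQuot.liftAlgHom_mkAlgHom_apply]
  simp [Φfree]

def b₀ : BIx := ([], false, none, none)

def ψ : A →ₗ[F2] M where
  toFun a := (Φ a).unop (single b₀ 1)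
  map_add' a b := by
    show (Φ (a + b)).unop _ = (Φ a).unop _ + (Φ b).unop _
    rw [map_add, unop_add, LinearMap.add_apply]
  map_smul' c a := by
    show (Φ (c • a)).unop _ = c • (Φ a).unop _
    rw [map_smul, unop_smul, LinearMap.smul_apply]

lemma ψ_mul_g (a : A) (i : Fin 5) : ψ (a * g i) = G i (ψ a) := by
  show (Φ (a * g i)).unop (single b₀ 1) = _
  rw [map_mul, Φ_g, unop_mul, unop_op]
  rfl

lemma ψ_one : ψ 1 = single b₀ 1 := by
  show (Φ 1).unop (single b₀ 1) = _
  rw [map_one]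
  rfl


@[simp] lemma G0 : G 0 = RT := rfl
@[simp] lemma G1 : G 1 = RX 0 := rfl
@[simp] lemma G2 : G 2 = RX 1 := rfl
@[simp] lemma G3 : G 3 = RY 0 := rfl
@[simp] lemma G4 : G 4 = RY 1 := rfl

lemma wWord_nil : wWord [] = 1 := rfl

lemma wWord_append (I : List (Fin 3)) (i : Fin 3) :
    wWord (I ++ [i]) = wWord I * w i := by
  simp [wWord]

lemma ψ_w (a : A) (I : List (Fin 3)) (h : ψ a = single (I, false, none, none) 1) (i : Fin 3) :
    ψ (a * w i) = single (I ++ [i], false, none, none) 1 := by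
  have e0 : a * w 0 = a * g 1 * g 0 + a * g 0 * g 1 := by
    rw [w]
    show a * (g 1 * t + t * g 1) = _
    simp only [t, mul_add, mul_assoc]
  have e1 : a * w 1 = a * g 2 * g 0 + a * g 0 * g 2 := by
    rw [w]
    show a * (g 2 * t + t * g 2) = _
    simp only [t, mul_add, mul_assoc]
  have e2 : a * w 2 = a * g 1 * (g 2 * g 0) + a * g 0 * (g 1 * g 2) := by
    rw [w]
    show a * (g 1 * g 2 * t + t * (g 1 * g 2)) = _
    simp only [t, mul_add, mul_assoc]
  fin_cases i
  · show ψ (a * w 0) = single (I ++ [0], false, none, none) 1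
    rw [e0, map_add, ψ_mul_g, ψ_mul_g, ψ_mul_g, ψ_mul_g, h]
    simp [rX, rT, mulOpt, add_assoc]
  · show ψ (a * w 1) = single (I ++ [1], false, none, none) 1
    rw [e1, map_add, ψ_mul_g, ψ_mul_g, ψ_mul_g, ψ_mul_g, h]
    simp [rX, rT, mulOpt, add_assoc]
  · show ψ (a * w 2) = single (I ++ [2], false, none, none) 1
    rw [e2, map_add, ← mul_assoc, ← mul_assoc (a * g 0),
      ψ_mul_g, ψ_mul_g, ψ_mul_g, ψ_mul_g, ψ_mul_g, ψ_mul_g, h]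
    simp [rX, rT, mulOpt, add_assoc]

lemma ψ_wWord (I : List (Fin 3)) : ψ (wWord I) = single (I, false, none, none) 1 := by
  induction I using List.reverseRecOn with
  | nil => rw [wWord_nil, ψ_one]; rfl
  | append_singleton I i ih => rw [wWord_append]; exact ψ_w _ _ ih i

lemma ψ_bElt (b : BIx) : ψ (bElt b) = single b 1 := by
  obtain ⟨I, e, ix, jy⟩ := b
  have h1 : ψ (wWord I * (if e then t else 1)) = single (I, e, none, none) 1 := by
    cases e
    · rw [if_neg (by simp), mul_one, ψ_wWord]
    · rw [if_pos rfl, t, ψ_mul_g, ψ_wWord]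
      simp [rT]
  have h2 : ψ (wWord I * (if e then t else 1) * (ix.elim 1 xg)) =
      single (I, e, ix, none) 1 := by
    rcases ix with _ | i
    · rw [Option.elim, mul_one, h1]
    · rw [Option.elim]
      fin_cases i
      · show ψ (_ * g 1) = _
        rw [ψ_mul_g, h1]; simp [rX, mulOpt]
      · show ψ (_ * g 2) = _
        rw [ψ_mul_g, h1]; simp [rX, mulOpt]
      · show ψ (_ * (g 1 * g 2)) = _
        rw [← mul_assoc, ψ_mul_g, ψ_mul_g, h1]; simp [rX, mulOpt]
  show ψ (wWord I * (if e then t else 1) * (ix.elim 1 xg) * (jy.elim 1 yg)) = _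
  rcases jy with _ | j
  · rw [Option.elim, mul_one, h2]
  · rw [Option.elim]
    fin_cases j
    · show ψ (_ * g 3) = _
      rw [ψ_mul_g, h2]; simp [rY, mulOpt]
    · show ψ (_ * g 4) = _
      rw [ψ_mul_g, h2]; simp [rY, mulOpt]
    · show ψ (_ * (g 3 * g 4)) = _
      rw [← mul_assoc, ψ_mul_g, ψ_mul_g, h2]; simp [rY, mulOpt]

lemma indep : LinearIndependent F2 bElt := by
  have h : ψ ∘ bElt = fun b : BIx => single b 1 := funext fun b => ψ_bElt b
  apply LinearIndependent.of_comp ψ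
  rw [h]
  exact Finsupp.basisSingleOne.linearIndependent


/-! ### Relations in `A` -/

lemma grel {x y : FA} (h : ARel x y) :
    RingQuot.mkAlgHom F2 ARel x = RingQuot.mkAlgHom F2 ARel y :=
  RingQuot.mkAlgHom_rel F2 h

lemma grel' {i j k l : Fin 5} (h : ARel (ι F2 i * ι F2 j) (ι F2 k * ι F2 l)) :
    g i * g j = g k * g l := by
  have h2 := grel h
  rw [map_mul, map_mul] at h2
  exact h2

lemma grel0 {i j : Fin 5} (h : ARel (ι F2 i * ι F2 j) 0) : g i * g j = 0 := by
  have h2 := grel h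
  rw [map_mul, map_zero] at h2
  exact h2

lemma tsq : t * t = 0 := grel0 ARel.t2
lemma x1sq : g 1 * g 1 = 0 := grel0 ARel.x1sq
lemma x2sq : g 2 * g 2 = 0 := grel0 ARel.x2sq
lemma xcomm : g 1 * g 2 = g 2 * g 1 := grel' ARel.xcomm
lemma y1sq : g 3 * g 3 = 0 := grel0 ARel.y1sq
lemma y2sq : g 4 * g 4 = 0 := grel0 ARel.y2sq
lemma ycomm : g 3 * g 4 = g 4 * g 3 := grel' ARel.ycomm
lemma ycen (i : Fin 3) (j : Fin 2) :
    g (Fin.castLE (by omega) i) * g (3 + Fin.castLE (by omega) j) =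
      g (3 + Fin.castLE (by omega) j) * g (Fin.castLE (by omega) i) :=
  grel' (ARel.ycentral i j)

lemma adjoin_top : Algebra.adjoin F2 (Set.range g) = ⊤ := by
  have hg : Set.range g = ⇑(RingQuot.mkAlgHom F2 ARel) '' Set.range (ι F2) := by
    rw [← Set.range_comp]; rfl
  rw [hg, ← AlgHom.map_adjoin, FreeAlgebra.adjoin_range_ι, Algebra.map_top,
    AlgHom.range_eq_top]
  exact RingQuot.mkAlgHom_surjective F2 ARel

lemma ycentral (a : A) (k : Fin 5) (hk : 3 ≤ k.val) : g k * a = a * g k := by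
  have hmem : a ∈ Subalgebra.centralizer F2 ({g 3, g 4} : Set A) := by
    have : Algebra.adjoin F2 (Set.range g) ≤ Subalgebra.centralizer F2 {g 3, g 4} := by
      apply Algebra.adjoin_le
      rintro x ⟨i, rfl⟩
      simp only [SetLike.mem_coe, Subalgebra.mem_centralizer_iff]
      rintro z (rfl | rfl)
      · -- g 3 * g i = g i * g 3
        fin_cases i
        · exact (ycen 0 0).symm
        · exact (ycen 1 0).symm
        · exact (ycen 2 0).symm
        · rfl
        · exact ycomm
      · fin_cases i
        · exact (ycen 0 1).symm
        · exact (ycen 1 1).symm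
        · exact (ycen 2 1).symm
        · exact ycomm.symm
        · rfl
    exact this (adjoin_top ▸ Algebra.mem_top)
  rw [Subalgebra.mem_centralizer_iff] at hmem
  fin_cases k <;> simp at hk ⊢
  · exact hmem (g 3) (by simp)
  · exact hmem (g 4) (by simp)


lemma addselfA (a : A) : a + a = 0 := by
  have h2 : (2 : F2) = 0 := rfl
  calc a + a = (2 : F2) • a := by rw [two_smul]
  _ = 0 := by rw [h2, zero_smul]

lemma xg0 : xg 0 = g 1 := rfl
lemma xg1 : xg 1 = g 2 := rfl
lemma xg2 : xg 2 = g 1 * g 2 := rfl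
lemma yg0 : yg 0 = g 3 := rfl
lemma yg1 : yg 1 = g 4 := rfl
lemma yg2 : yg 2 = g 3 * g 4 := rfl

lemma yg_comm (m : Fin 3) (a : A) : a * yg m = yg m * a := by
  have h3 := ycentral a 3 (by decide)
  have h4 := ycentral a 4 (by decide)
  fin_cases m
  · exact h3.symm
  · exact h4.symm
  · show a * (g 3 * g 4) = (g 3 * g 4) * a
    rw [← mul_assoc, ← h3, mul_assoc, ← h4, ← mul_assoc]

lemma Y_comm (jy : Option (Fin 3)) (a : A) : a * (jy.elim 1 yg) = (jy.elim 1 yg) * a := by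
  rcases jy with _ | m
  · rw [Option.elim, mul_one, one_mul]
  · exact yg_comm m a

lemma swapY (c Y Z : A) (h : ∀ d, d * Y = Y * d) : (c * Y) * Z = (c * Z) * Y := by
  rw [mul_assoc, ← h Z, ← mul_assoc]

/-- the `x`-part multiplication table -/
lemma xg_xg0 : xg 0 * g 1 = 0 := x1sq
lemma xg_xg1 : xg 1 * g 1 = xg 2 := xcomm.symm
lemma xg_xg2 : xg 2 * g 1 = 0 := by
  rw [xg2, mul_assoc, ← xcomm, ← mul_assoc, x1sq, zero_mul]
lemma xg_xg3 : xg 0 * g 2 = xg 2 := rfl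
lemma xg_xg4 : xg 1 * g 2 = 0 := x2sq
lemma xg_xg5 : xg 2 * g 2 = 0 := by
  rw [xg2, mul_assoc, x2sq, mul_zero]

lemma yg_yg0 : yg 0 * g 3 = 0 := y1sq
lemma yg_yg1 : yg 1 * g 3 = yg 2 := ycomm.symm
lemma yg_yg2 : yg 2 * g 3 = 0 := by
  rw [yg2, mul_assoc, ← ycomm, ← mul_assoc, y1sq, zero_mul]
lemma yg_yg3 : yg 0 * g 4 = yg 2 := rfl
lemma yg_yg4 : yg 1 * g 4 = 0 := y2sq
lemma yg_yg5 : yg 2 * g 4 = 0 := by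
  rw [yg2, mul_assoc, y2sq, mul_zero]

lemma xg_t (i : Fin 3) : xg i * t = w i + t * xg i := by
  rw [w, add_assoc, addselfA, add_zero]

lemma t_xg_t (i : Fin 3) : t * (xg i * t) = w i * t := by
  rw [w, add_mul, mul_assoc, tsq, mul_zero, zero_add, mul_assoc]

lemma bElt_mul (I : List (Fin 3)) (e : Bool) (ix jy : Option (Fin 3)) (z : A) :
    bElt (I, e, ix, jy) * z =
      ((wWord I * (if e then t else 1)) * (ix.elim 1 xg) * z) * (jy.elim 1 yg) := by
  show (((wWord I * _) * _) * (jy.elim 1 yg)) * z = _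
  rw [swapY _ _ _ (Y_comm jy)]


def S : Submodule F2 A := Submodule.span F2 (Set.range bElt)

lemma memS (b : BIx) : bElt b ∈ S := Submodule.subset_span ⟨b, rfl⟩

lemma g0t : g 0 = t := rfl

lemma key (I : List (Fin 3)) (e : Bool) (ix jy : Option (Fin 3)) (k : Fin 5) :
    bElt (I, e, ix, jy) * g k ∈ S := by
  fin_cases k
  · -- k = 0 : multiplication by t
    show bElt (I, e, ix, jy) * g 0 ∈ S
    rw [bElt_mul, g0t]
    cases e
    · rcases ix with _ | i
      · have h : wWord I * (if false then t else 1) * ((none : Option (Fin 3)).elim 1 xg) * t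
            = wWord I * (if true then t else 1) * ((none : Option (Fin 3)).elim 1 xg) := by
          simp
        rw [h]; exact memS (I, true, none, jy)
      · have h : wWord I * (if false then t else 1) * ((some i).elim 1 xg) * t
            = wWord (I ++ [i]) * (if false then t else 1) * ((none : Option (Fin 3)).elim 1 xg)
              + wWord I * (if true then t else 1) * ((some i).elim 1 xg) := by
          simp only [Option.elim_some, Option.elim_none, if_true, Bool.false_eq_true, if_false,
            mul_one]
          rw [mul_assoc, xg_t, mul_add, ← mul_assoc, ← wWord_append]
        rw [h, add_mul]
        exact add_mem (memS (I ++ [i], false, none, jy)) (memS (I, true, some i, jy))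
    · rcases ix with _ | i
      · have h : wWord I * (if true then t else 1) * ((none : Option (Fin 3)).elim 1 xg) * t
            = 0 := by
          simp only [Option.elim_none, if_true, mul_one]
          rw [mul_assoc, tsq, mul_zero]
        rw [h, zero_mul]; exact S.zero_mem
      · have h : wWord I * (if true then t else 1) * ((some i).elim 1 xg) * t
            = wWord (I ++ [i]) * (if true then t else 1) * ((none : Option (Fin 3)).elim 1 xg) := by
          simp only [Option.elim_some, Option.elim_none, if_true, mul_one]
          rw [mul_assoc, mul_assoc, t_xg_t, ← mul_assoc, ← wWord_append]
        rw [h]; exact memS (I ++ [i], true, none, jy)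
  · -- k = 1 : multiplication by x₁
    rcases ix with _ | i
    · show bElt (I, e, none, jy) * g 1 ∈ S
      rw [bElt_mul, mul_assoc (wWord I * (if e then t else 1))]
      rw [show ((none : Option (Fin 3)).elim 1 xg) * g 1
        = ((some 0 : Option (Fin 3)).elim 1 xg) by
          rw [Option.elim_none, Option.elim_some, one_mul, xg0]]
      exact memS (I, e, some 0, jy)
    · fin_cases i
      · show bElt (I, e, some 0, jy) * g 1 ∈ S
        rw [bElt_mul, mul_assoc (wWord I * (if e then t else 1))]
        rw [show ((some 0 : Option (Fin 3)).elim 1 xg) * g 1 = 0 from xg_xg0,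
          mul_zero, zero_mul]
        exact S.zero_mem
      · show bElt (I, e, some 1, jy) * g 1 ∈ S
        rw [bElt_mul, mul_assoc (wWord I * (if e then t else 1))]
        rw [show ((some 1 : Option (Fin 3)).elim 1 xg) * g 1
          = ((some 2 : Option (Fin 3)).elim 1 xg) from xg_xg1]
        exact memS (I, e, some 2, jy)
      · show bElt (I, e, some 2, jy) * g 1 ∈ S
        rw [bElt_mul, mul_assoc (wWord I * (if e then t else 1))]
        rw [show ((some 2 : Option (Fin 3)).elim 1 xg) * g 1 = 0 from xg_xg2,
          mul_zero, zero_mul]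
        exact S.zero_mem
  · -- k = 2 : multiplication by x₂
    rcases ix with _ | i
    · show bElt (I, e, none, jy) * g 2 ∈ S
      rw [bElt_mul, mul_assoc (wWord I * (if e then t else 1))]
      rw [show ((none : Option (Fin 3)).elim 1 xg) * g 2
        = ((some 1 : Option (Fin 3)).elim 1 xg) by
          rw [Option.elim_none, Option.elim_some, one_mul, xg1]]
      exact memS (I, e, some 1, jy)
    · fin_cases i
      · show bElt (I, e, some 0, jy) * g 2 ∈ S
        rw [bElt_mul, mul_assoc (wWord I * (if e then t else 1))]
        rw [show ((some 0 : Option (Fin 3)).elim 1 xg) * g 2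
          = ((some 2 : Option (Fin 3)).elim 1 xg) from xg_xg3]
        exact memS (I, e, some 2, jy)
      · show bElt (I, e, some 1, jy) * g 2 ∈ S
        rw [bElt_mul, mul_assoc (wWord I * (if e then t else 1))]
        rw [show ((some 1 : Option (Fin 3)).elim 1 xg) * g 2 = 0 from xg_xg4,
          mul_zero, zero_mul]
        exact S.zero_mem
      · show bElt (I, e, some 2, jy) * g 2 ∈ S
        rw [bElt_mul, mul_assoc (wWord I * (if e then t else 1))]
        rw [show ((some 2 : Option (Fin 3)).elim 1 xg) * g 2 = 0 from xg_xg5,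
          mul_zero, zero_mul]
        exact S.zero_mem
  · -- k = 3 : multiplication by y₁
    rcases jy with _ | j
    · show (wWord I * _ * _ * ((none : Option (Fin 3)).elim 1 yg)) * g 3 ∈ S
      rw [mul_assoc]
      rw [show ((none : Option (Fin 3)).elim 1 yg) * g 3
        = ((some 0 : Option (Fin 3)).elim 1 yg) by
          rw [Option.elim_none, Option.elim_some, one_mul, yg0]]
      exact memS (I, e, ix, some 0)
    · fin_cases j
      · show (wWord I * _ * _ * ((some (0:Fin 3)).elim 1 yg)) * g 3 ∈ S
        rw [mul_assoc, show ((some 0 : Option (Fin 3)).elim 1 yg) * g 3 = 0 from yg_yg0, mul_zero]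
        exact S.zero_mem
      · show (wWord I * _ * _ * ((some (1:Fin 3)).elim 1 yg)) * g 3 ∈ S
        rw [mul_assoc, show ((some 1 : Option (Fin 3)).elim 1 yg) * g 3
          = ((some 2 : Option (Fin 3)).elim 1 yg) from yg_yg1]
        exact memS (I, e, ix, some 2)
      · show (wWord I * _ * _ * ((some (2:Fin 3)).elim 1 yg)) * g 3 ∈ S
        rw [mul_assoc, show ((some 2 : Option (Fin 3)).elim 1 yg) * g 3 = 0 from yg_yg2, mul_zero]
        exact S.zero_mem
  · -- k = 4 : multiplication by y₂
    rcases jy with _ | j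
    · show (wWord I * _ * _ * ((none : Option (Fin 3)).elim 1 yg)) * g 4 ∈ S
      rw [mul_assoc]
      rw [show ((none : Option (Fin 3)).elim 1 yg) * g 4
        = ((some 1 : Option (Fin 3)).elim 1 yg) by
          rw [Option.elim_none, Option.elim_some, one_mul, yg1]]
      exact memS (I, e, ix, some 1)
    · fin_cases j
      · show (wWord I * _ * _ * ((some (0:Fin 3)).elim 1 yg)) * g 4 ∈ S
        rw [mul_assoc, show ((some 0 : Option (Fin 3)).elim 1 yg) * g 4
          = ((some 2 : Option (Fin 3)).elim 1 yg) from yg_yg3]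
        exact memS (I, e, ix, some 2)
      · show (wWord I * _ * _ * ((some (1:Fin 3)).elim 1 yg)) * g 4 ∈ S
        rw [mul_assoc, show ((some 1 : Option (Fin 3)).elim 1 yg) * g 4 = 0 from yg_yg4, mul_zero]
        exact S.zero_mem
      · show (wWord I * _ * _ * ((some (2:Fin 3)).elim 1 yg)) * g 4 ∈ S
        rw [mul_assoc, show ((some 2 : Option (Fin 3)).elim 1 yg) * g 4 = 0 from yg_yg5, mul_zero]
        exact S.zero_mem


lemma mulg_mem {s : A} (hs : s ∈ S) (k : Fin 5) : s * g k ∈ S := by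
  induction hs using Submodule.span_induction with
  | mem x hx =>
      obtain ⟨⟨I, e, ix, jy⟩, rfl⟩ := hx
      exact key I e ix jy k
  | zero => rw [zero_mul]; exact S.zero_mem
  | add x y _ _ ihx ihy => rw [add_mul]; exact add_mem ihx ihy
  | smul c x _ ih => rw [smul_mul_assoc]; exact S.smul_mem c ih

def Tsub : Subalgebra F2 A where
  carrier := {a | ∀ s ∈ S, s * a ∈ S}
  mul_mem' := fun {x y} hx hy s hs => by rw [← mul_assoc]; exact hy _ (hx s hs)
  add_mem' := fun {x y} hx hy s hs => by rw [mul_add]; exact add_mem (hx s hs) (hy s hs)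
  one_mem' := fun s hs => by rwa [mul_one]
  algebraMap_mem' := fun c s hs => by
    rw [← Algebra.commutes c s, Algebra.smul_def c s |>.symm]
    exact S.smul_mem c hs

lemma top_le_Tsub : (⊤ : Subalgebra F2 A) ≤ Tsub := by
  rw [← adjoin_top]
  apply Algebra.adjoin_le
  rintro x ⟨k, rfl⟩ s hs
  exact mulg_mem hs k

lemma oneS : (1 : A) ∈ S := by
  have h := memS ([], false, none, none)
  simpa [bElt, wWord] using h

lemma span_top : S = ⊤ := by
  rw [eq_top_iff]
  intro a _
  have ha : a ∈ Tsub := top_le_Tsub (Algebra.mem_top)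
  have h := ha 1 oneS
  rwa [one_mul] at h

end Stmt4

/-- additive basis theorem for `H_*(G_λ; ℤ₂)`: the elements
`w_I t^{ε_t} x_i^{ε_i} y_j^{η_j}` form a ℤ₂-vector space basis of `A`
(here the grading `deg t = deg x₁ = deg y₁ = 1`, `deg x₂ = deg y₂ = 2` plays
no role in the basis property itself). -/
theorem stmt_4 :
    LinearIndependent F2 bElt ∧ Submodule.span F2 (Set.range bElt) = ⊤ :=
  ⟨Stmt4.indep, Stmt4.span_top⟩
end
end
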